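/- The finite-horizon Q-learning iterates converge to the optimal Q-values: almost surely, Q^m → Q* as m → ∞, where Q* is the DP solution defined by Q*_N(s,a) = g_N(s) and Q*_k(s,a) = Σ_{j∈S} p_k(s,a,j)(g_k(s,a,j) + min_{b∈A} Q*_{k+1}(j,b)) for k = N−1,…,0. -/

import Mathlib

open Finset MeasureTheory ProbabilityTheory Filter Topology

set_option maxHeartbeats 1000000

noncomputable section


/-- Convergence of the inf over a finite nonempty type. -/
lemma tendsto_iInf_fintype {A : Type*} [Fintype A] [Nonempty A] {f : ℕ → A → ℝ} {g : A → ℝ}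
    (h : ∀ b, Tendsto (fun m => f m b) atTop (𝓝 (g b))) :
    Tendsto (fun m => ⨅ b, f m b) atTop (𝓝 (⨅ b, g b)) := by
  have hne : (Finset.univ : Finset A).Nonempty := Finset.univ_nonempty
  have hconv : ∀ v : A → ℝ, (⨅ b, v b) = Finset.univ.inf' hne v := by
    intro v
    rw [Finset.inf'_eq_csInf_image, Finset.coe_univ, Set.image_univ, iInf]
  simp only [hconv]
  exact Filter.Tendsto.finset_inf'_nhds_apply hne (fun b _ => h b)

/-- Core deterministic contraction lemma, limit 0. -/
lemma tendsto_contract_zero (a : ℕ → ℝ) (ha0 : ∀ m, 0 ≤ a m) (ha1 : ∀ m, a m ≤ 1)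
    (hsum : Tendsto (fun M => ∑ m ∈ Finset.range M, a m) atTop atTop)
    (b : ℕ → ℝ) (hb : Tendsto b atTop (𝓝 0))
    (x : ℕ → ℝ) (hx : ∀ m, x (m + 1) = (1 - a m) * x m + a m * b m) :
    Tendsto x atTop (𝓝 0) := by
  rw [Metric.tendsto_atTop]
  intro ε hε
  have hε3 : 0 < ε / 3 := by linarith
  obtain ⟨M, hM⟩ := (Metric.tendsto_atTop.1 hb) (ε / 3) hε3
  have hbM : ∀ m ≥ M, |b m| ≤ ε / 3 := fun m hm => by
    have := hM m hm; rw [Real.dist_eq, sub_zero] at this; exact this.le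
  set Pk : ℕ → ℝ := fun k => ∏ l ∈ Finset.range k, (1 - a (M + l)) with hPk
  have hP0 : ∀ k, 0 ≤ Pk k := fun k =>
    Finset.prod_nonneg fun l _ => by linarith [ha1 (M + l)]
  have key : ∀ k, |x (M + k)| ≤ ε / 3 + Pk k * |x M| := by
    intro k
    induction k with
    | zero => simp [hPk]; positivity
    | succ k ih =>
      have hrec := hx (M + k)
      have h1 : |x (M + (k + 1))| ≤ (1 - a (M + k)) * |x (M + k)| + a (M + k) * (ε / 3) := by
        have : x (M + (k + 1)) = (1 - a (M + k)) * x (M + k) + a (M + k) * b (M + k) := by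
          rw [show M + (k + 1) = (M + k) + 1 by ring, hrec]
        rw [this]
        calc |(1 - a (M + k)) * x (M + k) + a (M + k) * b (M + k)|
            ≤ |(1 - a (M + k)) * x (M + k)| + |a (M + k) * b (M + k)| := abs_add_le _ _
          _ = (1 - a (M + k)) * |x (M + k)| + a (M + k) * |b (M + k)| := by
              rw [abs_mul, abs_mul, abs_of_nonneg (by linarith [ha1 (M + k)]),
                abs_of_nonneg (ha0 (M + k))]
          _ ≤ (1 - a (M + k)) * |x (M + k)| + a (M + k) * (ε / 3) := by
              have := hbM (M + k) (Nat.le_add_right _ _)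
              nlinarith [ha0 (M + k)]
      have h2 : (1 - a (M + k)) * |x (M + k)| + a (M + k) * (ε / 3)
          ≤ ε / 3 + Pk (k + 1) * |x M| := by
        have h1a : 0 ≤ 1 - a (M + k) := by linarith [ha1 (M + k)]
        have := mul_le_mul_of_nonneg_left ih h1a
        have hPsucc : Pk (k + 1) = (1 - a (M + k)) * Pk k := by
          simp only [hPk, Finset.prod_range_succ]; ring
        nlinarith [ha0 (M + k), hP0 k, abs_nonneg (x M)]
      linarith
  -- Pk tends to 0
  have hPtend : Tendsto Pk atTop (𝓝 0) := by
    have hPle : ∀ k, Pk k ≤ Real.exp (-(∑ l ∈ Finset.range k, a (M + l))) := by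
      intro k
      have : Real.exp (-(∑ l ∈ Finset.range k, a (M + l)))
          = ∏ l ∈ Finset.range k, Real.exp (-a (M + l)) := by
        rw [← Real.exp_sum, Finset.sum_neg_distrib]
      rw [this, hPk]
      refine Finset.prod_le_prod (fun l _ => by linarith [ha1 (M + l)]) fun l _ => ?_
      have := Real.add_one_le_exp (-a (M + l))
      linarith
    have hT : Tendsto (fun k => ∑ l ∈ Finset.range k, a (M + l)) atTop atTop := by
      have heq : ∀ k, ∑ l ∈ Finset.range k, a (M + l)
          = (∑ m ∈ Finset.range (M + k), a m) + -(∑ m ∈ Finset.range M, a m) := by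
        intro k; rw [Finset.sum_range_add]; ring
      simp only [heq]
      refine tendsto_atTop_add_const_right _ _ ?_
      exact hsum.comp (tendsto_atTop_mono (fun k => Nat.le_add_left k M) tendsto_id)
    have hexp : Tendsto (fun k => Real.exp (-(∑ l ∈ Finset.range k, a (M + l)))) atTop (𝓝 0) :=
      Real.tendsto_exp_atBot.comp (tendsto_neg_atTop_atBot.comp hT)
    exact squeeze_zero hP0 hPle hexp
  have : Tendsto (fun k => Pk k * |x M|) atTop (𝓝 0) := by
    simpa using hPtend.mul_const |x M|
  obtain ⟨K, hK⟩ := (Metric.tendsto_atTop.1 this) (ε / 3) hε3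
  refine ⟨M + K, fun m hm => ?_⟩
  have hmk : m = M + (m - M) := by omega
  have hK' : Pk (m - M) * |x M| ≤ ε / 3 := by
    have := hK (m - M) (by omega)
    rw [Real.dist_eq, sub_zero] at this
    calc Pk (m - M) * |x M| ≤ abs (Pk (m - M) * |x M|) := le_abs_self _
      _ ≤ ε / 3 := this.le
  have := key (m - M)
  rw [Real.dist_eq, sub_zero, hmk]
  calc |x (M + (m - M))| ≤ ε / 3 + Pk (m - M) * |x M| := this
    _ ≤ ε / 3 + ε / 3 := by linarith
    _ < ε := by linarith

/-- Contraction lemma with eventual step bound and general limit. -/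
lemma tendsto_contract (a : ℕ → ℝ) (ha0 : ∀ m, 0 ≤ a m) (m0 : ℕ) (ha1 : ∀ m, m0 ≤ m → a m ≤ 1)
    (hsum : Tendsto (fun M => ∑ m ∈ Finset.range M, a m) atTop atTop)
    (b : ℕ → ℝ) (c : ℝ) (hb : Tendsto b atTop (𝓝 c))
    (x : ℕ → ℝ) (hx : ∀ m, x (m + 1) = (1 - a m) * x m + a m * b m) :
    Tendsto x atTop (𝓝 c) := by
  set a' : ℕ → ℝ := fun m => a (m + m0) with ha'
  set b' : ℕ → ℝ := fun m => b (m + m0) - c with hb'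
  set x' : ℕ → ℝ := fun m => x (m + m0) - c with hx'def
  have hx' : ∀ m, x' (m + 1) = (1 - a' m) * x' m + a' m * b' m := by
    intro m
    have h1 : x (m + 1 + m0) = (1 - a (m + m0)) * x (m + m0) + a (m + m0) * b (m + m0) := by
      rw [show m + 1 + m0 = (m + m0) + 1 by ring, hx (m + m0)]
    simp only [ha', hb', hx'def, h1]; ring
  have hsum' : Tendsto (fun M => ∑ m ∈ Finset.range M, a' m) atTop atTop := by
    have heq : ∀ M : ℕ, ∑ m ∈ Finset.range M, a' m
        = (∑ m ∈ Finset.range (m0 + M), a m) + -(∑ m ∈ Finset.range m0, a m) := by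
      intro M
      rw [Finset.sum_range_add]
      have : ∀ i ∈ Finset.range M, a (m0 + i) = a' i := fun i _ => by
        simp only [ha', add_comm]
      rw [Finset.sum_congr rfl this]; ring
    simp only [heq]
    refine tendsto_atTop_add_const_right _ _ ?_
    exact hsum.comp (tendsto_atTop_mono (fun k => Nat.le_add_left k m0) tendsto_id)
  have hb'0 : Tendsto b' atTop (𝓝 0) := by
    have h1 : Tendsto (fun m => b (m + m0)) atTop (𝓝 c) :=
      hb.comp (tendsto_atTop_mono (fun k => Nat.le.intro rfl) tendsto_id)
    simpa [hb'] using h1.sub_const c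
  have hx'0 : Tendsto x' atTop (𝓝 0) :=
    tendsto_contract_zero a' (fun m => ha0 _) (fun m => ha1 _ (Nat.le_add_left m0 m)) hsum'
      b' hb'0 x' hx'
  have h2 : Tendsto (fun m => x (m + m0)) atTop (𝓝 c) := by
    have := hx'0.add_const c
    simp only [hx'def, sub_add_cancel, zero_add] at this
    exact this
  exact (tendsto_add_atTop_iff_nat m0).1 h2

/-- Contraction lemma with additive noise whose weighted partial sums converge. -/
lemma tendsto_contract_noise (a : ℕ → ℝ) (ha0 : ∀ m, 0 ≤ a m) (m0 : ℕ)
    (ha1 : ∀ m, m0 ≤ m → a m ≤ 1)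
    (hsum : Tendsto (fun M => ∑ m ∈ Finset.range M, a m) atTop atTop)
    (b : ℕ → ℝ) (c : ℝ) (hb : Tendsto b atTop (𝓝 c))
    (ξ : ℕ → ℝ) (L : ℝ)
    (hS : Tendsto (fun M => ∑ m ∈ Finset.range M, a m * ξ m) atTop (𝓝 L))
    (x : ℕ → ℝ) (hx : ∀ m, x (m + 1) = (1 - a m) * x m + a m * (b m + ξ m)) :
    Tendsto x atTop (𝓝 c) := by
  set Sp : ℕ → ℝ := fun M => ∑ m ∈ Finset.range M, a m * ξ m with hSp
  set u : ℕ → ℝ := fun m => x m - Sp m with hu_def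
  have hu : ∀ m, u (m + 1) = (1 - a m) * u m + a m * (b m - Sp m) := by
    intro m
    have h1 : Sp (m + 1) = Sp m + a m * ξ m := by
      simp [hSp, Finset.sum_range_succ]
    simp only [hu_def, h1, hx m]; ring
  have hu0 : Tendsto u atTop (𝓝 (c - L)) :=
    tendsto_contract a ha0 m0 ha1 hsum (fun m => b m - Sp m) (c - L) (hb.sub hS) u hu
  have : Tendsto (fun m => u m + Sp m) atTop (𝓝 (c - L + L)) := hu0.add hS
  simpa [hu_def] using this



lemma integrable_of_abs_le {Ω : Type*} [MeasurableSpace Ω] {P : Measure Ω} [IsFiniteMeasure P]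
    {f : Ω → ℝ} (hf : Measurable f) {C : ℝ} (h : ∀ ω, |f ω| ≤ C) : Integrable f P :=
  (integrable_const C).mono' hf.aestronglyMeasurable
    (ae_of_all _ (by simpa [Real.norm_eq_abs] using h))

lemma iIndepFun_comp_of_injective {ι κ Ω β : Type*} [MeasurableSpace Ω] {mβ : MeasurableSpace β}
    {μ : MeasureTheory.Measure Ω} {f : ι → Ω → β}
    (h : iIndepFun f μ) (u : κ → ι) (hu : Function.Injective u) :
    iIndepFun (fun k => f (u k)) μ := by
  rw [iIndepFun_iff_measure_inter_preimage_eq_mul] at h ⊢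
  intro S sets hsets
  classical
  set sets' : ι → Set β := fun i =>
    if hi : ∃ k ∈ S, u k = i then sets hi.choose else Set.univ with hsets'def
  have hkey : ∀ k ∈ S, sets' (u k) = sets k := by
    intro k hk
    have hi : ∃ k' ∈ S, u k' = u k := ⟨k, hk, rfl⟩
    have hch : hi.choose = k := hu hi.choose_spec.2
    simp only [hsets'def, dif_pos hi, hch]
  have h1 := h (S.image u) (sets := sets') ?_
  · rw [Finset.prod_image (fun k hk k' hk' hkk' => hu hkk')] at h1
    have h2 : (⋂ i ∈ S.image u, f i ⁻¹' sets' i) = ⋂ k ∈ S, f (u k) ⁻¹' sets k := by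
      rw [set_biInter_finset_image]
      exact Set.iInter₂_congr fun k hk => by rw [hkey k hk]
    rw [h2] at h1
    rw [h1]
    exact Finset.prod_congr rfl fun k hk => by rw [hkey k hk]
  · intro i hi
    rcases Finset.mem_image.1 hi with ⟨k, hk, rfl⟩
    rw [hkey k hk]
    exact hsets k hk

lemma integral_comp_finite {Ω S : Type*} [MeasurableSpace Ω] [Fintype S] [MeasurableSpace S]
    [MeasurableSingletonClass S] (P : MeasureTheory.Measure Ω) [IsProbabilityMeasure P]
    (X : Ω → S) (hX : Measurable X) (q : S → ℝ) (hq : ∀ j, 0 ≤ q j)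
    (hd : ∀ j, P {ω | X ω = j} = ENNReal.ofReal (q j)) (F : S → ℝ) :
    ∫ ω, F (X ω) ∂P = ∑ j, q j * F j := by
  have hmeasSet : ∀ j : S, MeasurableSet {ω | X ω = j} := fun j =>
    hX (measurableSet_singleton j)
  have hrep : ∀ ω, F (X ω) = ∑ j, Set.indicator {ω' | X ω' = j} (fun _ => F j) ω := by
    intro ω
    rw [Finset.sum_eq_single (X ω)]
    · simp [Set.indicator_of_mem, Set.mem_setOf_eq]
    · intro j _ hj
      apply Set.indicator_of_notMem
      simp only [Set.mem_setOf_eq]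
      exact fun hmm => hj (hmm ▸ rfl)
    · simp
  have hint : ∀ j : S, Integrable (Set.indicator {ω' | X ω' = j} (fun _ => F j)) P := fun j =>
    (integrable_const (F j)).indicator (hmeasSet j)
  calc ∫ ω, F (X ω) ∂P
      = ∫ ω, ∑ j, Set.indicator {ω' | X ω' = j} (fun _ => F j) ω ∂P := by
        exact integral_congr_ae (ae_of_all _ hrep)
    _ = ∑ j, ∫ ω, Set.indicator {ω' | X ω' = j} (fun _ => F j) ω ∂P :=
        integral_finset_sum _ fun j _ => hint j
    _ = ∑ j, q j * F j := by
        refine Finset.sum_congr rfl fun j _ => ?_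
        rw [integral_indicator_const (F j) (hmeasSet j), measureReal_def, hd j, smul_eq_mul,
          ENNReal.toReal_ofReal (hq j)]

lemma exists_tendsto_sum_mul_of_indep {Ω : Type*} [MeasurableSpace Ω]
    (P : MeasureTheory.Measure Ω) [IsProbabilityMeasure P] (ξ : ℕ → Ω → ℝ)
    (hmeas : ∀ m, Measurable (ξ m)) (C : ℝ) (hC : 0 ≤ C)
    (hbd : ∀ m ω, |ξ m ω| ≤ C)
    (hmean : ∀ m, ∫ ω, ξ m ω ∂P = 0)
    (hind : iIndepFun ξ P)
    (a : ℕ → ℝ) (hsq : Summable fun m => a m ^ 2) :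
    ∀ᵐ ω ∂P, ∃ L, Tendsto (fun M => ∑ m ∈ Finset.range M, a m * ξ m ω) atTop (𝓝 L) := by
  classical
  set h : ℕ → Ω → ℝ := fun m ω => a m * ξ m ω with hh
  have hhmeas : ∀ m, Measurable (h m) := fun m => (hmeas m).const_mul (a m)
  have hhind : iIndepFun h P :=
    hind.comp (fun m (x : ℝ) => a m * x) (fun m => measurable_id.const_mul (a m))
  set f : ℕ → Ω → ℝ := fun M ω => ∑ m ∈ Finset.range (M + 1), h m ω with hf
  have hbnd_h : ∀ m ω, |h m ω| ≤ |a m| * C := fun m ω => by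
    rw [hh, abs_mul]
    exact mul_le_mul_of_nonneg_left (hbd m ω) (abs_nonneg _)
  set B : ℕ → ℝ := fun M => ∑ m ∈ Finset.range (M + 1), |a m| * C with hB
  have hfbd : ∀ M ω, |f M ω| ≤ B M := by
    intro M ω
    calc |f M ω| ≤ ∑ m ∈ Finset.range (M + 1), |h m ω| := Finset.abs_sum_le_sum_abs _ _
      _ ≤ B M := Finset.sum_le_sum fun m _ => hbnd_h m ω
  have hfmeas : ∀ M, Measurable (f M) :=
    fun M => Finset.measurable_sum _ fun m _ => hhmeas m
  have hfint : ∀ M, Integrable (f M) P := fun M => integrable_of_abs_le (hfmeas M) (hfbd M)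
  -- integrability of squares and products
  have hsq_int : ∀ M, Integrable (fun ω => (f M ω) ^ 2) P := by
    intro M
    refine integrable_of_abs_le ((hfmeas M).pow_const 2) (C := (B M) ^ 2) fun ω => ?_
    rw [abs_pow]
    exact pow_le_pow_left₀ (abs_nonneg _) (hfbd M ω) 2
  have hxi_sq_le : ∀ m, ∫ ω, (ξ m ω) ^ 2 ∂P ≤ C ^ 2 := by
    intro m
    have hle : ∀ ω, (ξ m ω) ^ 2 ≤ C ^ 2 := fun ω => by
      have hab := abs_le.1 (hbd m ω)
      nlinarith [hab.1, hab.2]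
    calc ∫ ω, (ξ m ω) ^ 2 ∂P ≤ ∫ _, C ^ 2 ∂P := by
          refine integral_mono ?_ (integrable_const _) hle
          refine integrable_of_abs_le ((hmeas m).pow_const 2) (C := C ^ 2) fun ω => ?_
          rw [abs_of_nonneg (sq_nonneg _)]; exact hle ω
      _ = C ^ 2 := by simp
  -- key L² bound
  have key2 : ∀ M, ∫ ω, (f M ω) ^ 2 ∂P ≤ C ^ 2 * ∑ m ∈ Finset.range (M + 1), a m ^ 2 := by
    intro M
    induction M with
    | zero =>
      have heq0 : ∀ ω, (f 0 ω) ^ 2 = a 0 ^ 2 * (ξ 0 ω) ^ 2 := fun ω => by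
        simp only [hf, hh, zero_add, Finset.sum_range_one]; ring
      rw [integral_congr_ae (ae_of_all _ heq0), integral_const_mul]
      simp only [zero_add, Finset.sum_range_one]
      calc a 0 ^ 2 * ∫ ω, (ξ 0 ω) ^ 2 ∂P ≤ a 0 ^ 2 * C ^ 2 :=
            mul_le_mul_of_nonneg_left (hxi_sq_le 0) (sq_nonneg _)
        _ = C ^ 2 * a 0 ^ 2 := by ring
    | succ M ih =>
      have hsplit : ∀ ω, f (M + 1) ω = f M ω + h (M + 1) ω := fun ω => by
        simp only [hf, Finset.sum_range_succ]
      have hexp : ∀ ω, (f (M + 1) ω) ^ 2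
          = (f M ω) ^ 2 + 2 * (f M ω * h (M + 1) ω) + a (M + 1) ^ 2 * (ξ (M + 1) ω) ^ 2 := by
        intro ω; rw [hsplit ω, hh]; ring
      have hint_fh : Integrable (fun ω => f M ω * h (M + 1) ω) P := by
        refine integrable_of_abs_le ((hfmeas M).mul (hhmeas (M + 1)))
          (C := B M * (|a (M + 1)| * C)) fun ω => ?_
        rw [abs_mul]
        exact mul_le_mul (hfbd M ω) (hbnd_h _ ω) (abs_nonneg _)
          (le_trans (abs_nonneg _) (hfbd M ω))
      have hint_xisq : Integrable (fun ω => a (M + 1) ^ 2 * (ξ (M + 1) ω) ^ 2) P := by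
        refine Integrable.const_mul ?_ _
        refine integrable_of_abs_le ((hmeas (M + 1)).pow_const 2) (C := C ^ 2) fun ω => ?_
        rw [abs_of_nonneg (sq_nonneg _)]
        have hab := abs_le.1 (hbd (M + 1) ω)
        nlinarith [hab.1, hab.2]
      have hIfh : ∫ ω, f M ω * h (M + 1) ω ∂P = 0 := by
        have hindep : IndepFun (f M) (h (M + 1)) P := by
          have := hhind.indepFun_sum_range_succ hhmeas (M + 1)
          have hfeq : f M = ∑ j ∈ Finset.range (M + 1), h j := by
            funext ω; rw [hf, Finset.sum_apply]
          rwa [← hfeq] at this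
        have := hindep.integral_fun_mul_eq_mul_integral (hfmeas M).aestronglyMeasurable
          (hhmeas (M + 1)).aestronglyMeasurable
        have hIh : ∫ ω, h (M + 1) ω ∂P = 0 := by
          simp only [hh]
          rw [integral_const_mul, hmean (M + 1), mul_zero]
        calc ∫ ω, f M ω * h (M + 1) ω ∂P = (∫ ω, f M ω ∂P) * ∫ ω, h (M + 1) ω ∂P := this
          _ = 0 := by rw [hIh, mul_zero]
      calc ∫ ω, (f (M + 1) ω) ^ 2 ∂P
          = ∫ ω, ((f M ω) ^ 2 + 2 * (f M ω * h (M + 1) ω)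
              + a (M + 1) ^ 2 * (ξ (M + 1) ω) ^ 2) ∂P :=
            integral_congr_ae (ae_of_all _ hexp)
        _ = (∫ ω, ((f M ω) ^ 2 + 2 * (f M ω * h (M + 1) ω)) ∂P)
              + ∫ ω, a (M + 1) ^ 2 * (ξ (M + 1) ω) ^ 2 ∂P :=
            integral_add ((hsq_int M).add (hint_fh.const_mul 2)) hint_xisq
        _ = (∫ ω, (f M ω) ^ 2 ∂P) + 2 * (∫ ω, f M ω * h (M + 1) ω ∂P)
              + a (M + 1) ^ 2 * ∫ ω, (ξ (M + 1) ω) ^ 2 ∂P := by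
            rw [integral_add (hsq_int M) (hint_fh.const_mul 2), integral_const_mul,
              integral_const_mul]
        _ ≤ C ^ 2 * (∑ m ∈ Finset.range (M + 1), a m ^ 2) + 0 + a (M + 1) ^ 2 * C ^ 2 := by
            rw [hIfh]
            have h3 := mul_le_mul_of_nonneg_left (hxi_sq_le (M + 1)) (sq_nonneg (a (M + 1)))
            linarith [ih]
        _ = C ^ 2 * ∑ m ∈ Finset.range (M + 2), a m ^ 2 := by
            rw [Finset.sum_range_succ (n := M + 1)]; ring
  have hint_h : ∀ m, Integrable (h m) P := fun m => integrable_of_abs_le (hhmeas m) (hbnd_h m)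
  -- the natural filtration of the noise
  set 𝒢 : Filtration ℕ (inferInstance : MeasurableSpace Ω) :=
    Filtration.natural ξ (fun m => (hmeas m).stronglyMeasurable) with h𝒢
  have h𝒢M : ∀ M : ℕ, (𝒢 M : MeasurableSpace Ω)
      = ⨆ j, ⨆ _ : j ≤ M, MeasurableSpace.comap (ξ j) inferInstance := fun M => rfl
  have hxiGmeas : ∀ j M : ℕ, j ≤ M → Measurable[𝒢 M] (ξ j) := fun j M hj =>
    Measurable.of_comap_le (by
      rw [h𝒢M M]
      exact le_iSup₂ (f := fun j (_ : j ≤ M) =>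
        MeasurableSpace.comap (ξ j) inferInstance) j hj)
  have hadp : StronglyAdapted 𝒢 f := by
    intro M
    have hm : Measurable[𝒢 M] (f M) := by
      simp only [hf, hh]
      exact Finset.measurable_sum _ fun m hm =>
        ((hxiGmeas m M (Nat.lt_succ_iff.1 (Finset.mem_range.1 hm))).const_mul (a m))
    exact hm.stronglyMeasurable
  have hindepSig : ∀ M : ℕ,
      Indep (MeasurableSpace.comap (ξ (M + 1)) inferInstance) (𝒢 M) P := by
    intro M
    have h_le : ∀ n : ℕ, MeasurableSpace.comap (ξ n) inferInstance
        ≤ (inferInstance : MeasurableSpace Ω) := fun n => (hmeas n).comap_le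
    have h1 := ProbabilityTheory.indep_biSup_compl h_le hind.iIndep {M + 1}
    refine indep_of_indep_of_le_right (indep_of_indep_of_le_left h1 ?_) ?_
    · exact le_iSup₂ (f := fun n (_ : n ∈ ({M + 1} : Set ℕ)) =>
        MeasurableSpace.comap (ξ n) inferInstance) (M + 1) rfl
    · rw [h𝒢M M]
      refine iSup₂_le fun j hj => ?_
      refine le_iSup₂ (f := fun n (_ : n ∈ ({M + 1} : Set ℕ)ᶜ) =>
        MeasurableSpace.comap (ξ n) inferInstance) j ?_
      simp only [Set.mem_compl_iff, Set.mem_singleton_iff]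
      omega
  have hmart : ∀ M, f M =ᵐ[P] P[f (M + 1)|𝒢 M] := by
    intro M
    have hsplit : f (M + 1) = f M + h (M + 1) := by
      funext ω; simp [hf, Finset.sum_range_succ]
    have h1 : P[f M|𝒢 M] = f M :=
      condExp_of_stronglyMeasurable (𝒢.le M) (hadp M) (hfint M)
    have h2 : P[ξ (M + 1)|𝒢 M] =ᵐ[P] fun _ => ∫ ω, ξ (M + 1) ω ∂P :=
      condExp_indep_eq (hmeas (M + 1)).comap_le (𝒢.le M)
        (Measurable.stronglyMeasurable (measurable_iff_comap_le.2 le_rfl)) (hindepSig M)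
    have h3 : P[h (M + 1)|𝒢 M] =ᵐ[P] fun _ => 0 := by
      have hsmul : h (M + 1) = a (M + 1) • ξ (M + 1) := by
        funext ω; simp [hh]
      calc P[h (M + 1)|𝒢 M] = P[a (M + 1) • ξ (M + 1)|𝒢 M] := by rw [hsmul]
        _ =ᵐ[P] a (M + 1) • P[ξ (M + 1)|𝒢 M] := condExp_smul _ _ _
        _ =ᵐ[P] a (M + 1) • (fun _ => ∫ ω, ξ (M + 1) ω ∂P) := by
            exact h2.mono fun ω hω => by simp [hω]
        _ = fun _ => 0 := by
            funext ω; simp [hmean (M + 1)]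
    have hmain : P[f (M + 1)|𝒢 M] =ᵐ[P] f M := by
      calc P[f (M + 1)|𝒢 M] = P[f M + h (M + 1)|𝒢 M] := by rw [hsplit]
        _ =ᵐ[P] P[f M|𝒢 M] + P[h (M + 1)|𝒢 M] := condExp_add (hfint M) (hint_h (M + 1)) _
        _ =ᵐ[P] f M + fun _ => 0 := by
            rw [h1]
            exact EventuallyEq.add EventuallyEq.rfl h3
        _ = f M := by funext ω; simp
    exact hmain.symm
  have hMart : Martingale f 𝒢 P := martingale_nat hadp hfint hmart
  set K := ∑' m, a m ^ 2 with hK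
  have hKb : ∀ M, ∑ m ∈ Finset.range (M + 1), a m ^ 2 ≤ K :=
    fun M => Summable.sum_le_tsum _ (fun _ _ => sq_nonneg _) hsq
  have hintabs : ∀ M, ∫ ω, |f M ω| ∂P ≤ (1 + C ^ 2 * K) / 2 := by
    intro M
    have hptw : ∀ ω, |f M ω| ≤ (1 + (f M ω) ^ 2) / 2 := fun ω => by
      nlinarith [sq_nonneg (|f M ω| - 1), sq_abs (f M ω)]
    have h1 : ∫ ω, |f M ω| ∂P ≤ ∫ ω, (1 + (f M ω) ^ 2) / 2 ∂P := by
      refine integral_mono ((hfint M).abs) ?_ hptw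
      exact ((integrable_const 1).add (hsq_int M)).div_const 2
    have h2 : ∫ ω, (1 + (f M ω) ^ 2) / 2 ∂P = (1 + ∫ ω, (f M ω) ^ 2 ∂P) / 2 := by
      rw [integral_div, integral_add (integrable_const 1) (hsq_int M), integral_const]
      simp
    have h3 := key2 M
    have h4 : C ^ 2 * (∑ m ∈ Finset.range (M + 1), a m ^ 2) ≤ C ^ 2 * K :=
      mul_le_mul_of_nonneg_left (hKb M) (sq_nonneg C)
    linarith
  set R : NNReal := Real.toNNReal ((1 + C ^ 2 * K) / 2) with hR
  have hbdd : ∀ M, eLpNorm (f M) 1 P ≤ (R : ENNReal) := by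
    intro M
    have he : eLpNorm (f M) 1 P = ENNReal.ofReal (∫ ω, ‖f M ω‖ ∂P) := by
      rw [eLpNorm_one_eq_lintegral_enorm, ← ofReal_integral_norm_eq_lintegral_enorm (hfint M)]
    rw [he]
    have hReq : (R : ENNReal) = ENNReal.ofReal ((1 + C ^ 2 * K) / 2) := rfl
    rw [hReq]
    apply ENNReal.ofReal_le_ofReal
    simpa [Real.norm_eq_abs] using hintabs M
  have hconv := hMart.submartingale.ae_tendsto_limitProcess hbdd
  filter_upwards [hconv] with ω hω
  refine ⟨𝒢.limitProcess f P ω, ?_⟩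
  rw [← tendsto_add_atTop_iff_nat 1]
  exact hω

/-- The finite-horizon Q-learning iterates `Q^m_n(i,a)(ω)`.
`Qiter N g gN step η Q0 m n i a ω = Q^m_n(i,a)(ω)`, defined by
`Q^0 = Q0` and, for `n < N`,
`Q^{m+1}_n(i,a) = Q^m_n(i,a) + a(m)(g_n(i,a,η_n^m(i,a)) + min_b Q^m_{n+1}(η_n^m(i,a),b) − Q^m_n(i,a))`,
with `Q^{m+1}_N(i,a) = g_N(i)`. -/
def Qiter {S A Ω : Type*} [Fintype A] [Nonempty A] (N : ℕ)
    (g : ℕ → S → A → S → ℝ) (gN : S → ℝ) (step : ℕ → ℝ)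
    (η : ℕ → Fin N → S → A → Ω → S) (Q0 : ℕ → S → A → ℝ) :
    ℕ → ℕ → S → A → Ω → ℝ
  | 0, n, i, a, _ => Q0 n i a
  | m + 1, n, i, a, ω =>
      if h : n < N then
        Qiter N g gN step η Q0 m n i a ω +
          step m * (g n i a (η m ⟨n, h⟩ i a ω) +
            (⨅ b : A, Qiter N g gN step η Q0 m (n + 1) (η m ⟨n, h⟩ i a ω) b ω) -
            Qiter N g gN step η Q0 m n i a ω)
      else gN i

/-- The Q-learning noise `M^{m+1}_n(i,a)(ω)` (with `Mnoise … m` denoting `M^{m+1}`):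
for `n < N` it equals
`g_n(i,a,η_n^m(i,a)) + min_b Q^m_{n+1}(η_n^m(i,a),b)
  − Σ_j p_n(i,a,j)(g_n(i,a,j) + min_b Q^m_{n+1}(j,b))`,
and it vanishes for `n = N`. -/
def Mnoise {S A Ω : Type*} [Fintype S] [Fintype A] [Nonempty A] (N : ℕ)
    (p g : ℕ → S → A → S → ℝ) (gN : S → ℝ) (step : ℕ → ℝ)
    (η : ℕ → Fin N → S → A → Ω → S) (Q0 : ℕ → S → A → ℝ)
    (m n : ℕ) (i : S) (a : A) (ω : Ω) : ℝ :=
  if h : n < N then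
    g n i a (η m ⟨n, h⟩ i a ω) +
      (⨅ b : A, Qiter N g gN step η Q0 m (n + 1) (η m ⟨n, h⟩ i a ω) b ω) -
      ∑ j, p n i a j * (g n i a j + ⨅ b : A, Qiter N g gN step η Q0 m (n + 1) j b ω)
  else 0

/-- The σ-algebra `F_m` generated by the samples `η_{n'}^l(i',a')` for `l < m`. -/
def filt {S A Ω : Type*} [MeasurableSpace S] (N : ℕ)
    (η : ℕ → Fin N → S → A → Ω → S) (m : ℕ) : MeasurableSpace Ω :=
  ⨆ (l : ℕ) (_ : l < m) (n : Fin N) (i : S) (a : A),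
    MeasurableSpace.comap (η l n i a) inferInstance


/-- the finite-horizon Q-learning iterates converge almost surely to the
optimal Q-values `Q*`, the solution of the DP backward recursion. -/
theorem q_learning_converges_to_optimal
    {S A Ω : Type*} [Fintype S] [Nonempty S] [MeasurableSpace S]
    [MeasurableSingletonClass S] [Fintype A] [Nonempty A] [MeasurableSpace Ω]
    (N : ℕ) (hN : 1 ≤ N)
    (p g : ℕ → S → A → S → ℝ) (gN : S → ℝ)
    (hp0 : ∀ n < N, ∀ i a j, 0 ≤ p n i a j)
    (hp1 : ∀ n < N, ∀ i a, ∑ j, p n i a j = 1)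
    (P : Measure Ω) [IsProbabilityMeasure P]
    (η : ℕ → Fin N → S → A → Ω → S)
    (hmeas : ∀ m n i a, Measurable (η m n i a))
    (hdist : ∀ (m : ℕ) (n : Fin N) (i : S) (a : A) (j : S),
      P {ω | η m n i a ω = j} = ENNReal.ofReal (p n i a j))
    (hindep : iIndepFun
      (fun x : ℕ × Fin N × S × A => η x.1 x.2.1 x.2.2.1 x.2.2.2) P)
    (step : ℕ → ℝ) (hstep : ∀ m, 0 < step m)
    (hstep_sum : Tendsto (fun M => ∑ m ∈ Finset.range M, step m) atTop atTop)
    (hstep_sq : Summable (fun m => (step m) ^ 2))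
    (Q0 : ℕ → S → A → ℝ) (hQ0N : ∀ i a, Q0 N i a = gN i)
    (Qs : ℕ → S → A → ℝ)
    (hQsN : ∀ i a, Qs N i a = gN i)
    (hQsrec : ∀ k < N, ∀ i a,
      Qs k i a = ∑ j, p k i a j * (g k i a j + ⨅ b : A, Qs (k + 1) j b)) :
    ∀ᵐ ω ∂P, ∀ n : ℕ, n ≤ N → ∀ (i : S) (a : A),
      Tendsto (fun m => Qiter N g gN step η Q0 m n i a ω) atTop (nhds (Qs n i a)) := by
  classical
  -- eventually step ≤ 1
  obtain ⟨m0, hm0⟩ : ∃ m0, ∀ m ≥ m0, step m ≤ 1 := by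
    have h2 := hstep_sq.tendsto_atTop_zero
    have h3 : ∀ᶠ m in atTop, step m ^ 2 < 1 := h2.eventually (gt_mem_nhds (by norm_num))
    obtain ⟨m0, hm0⟩ := eventually_atTop.1 h3
    exact ⟨m0, fun m hm => by nlinarith [hm0 m hm, hstep m]⟩
  -- the iterates at level N are constant
  have hconstN : ∀ m (i : S) (a : A) (ω : Ω), Qiter N g gN step η Q0 m N i a ω = gN i := by
    intro m i a ω
    cases m with
    | zero => simp [Qiter, hQ0N]
    | succ m => simp [Qiter]
  have baseN : ∀ᵐ ω ∂P, ∀ (i : S) (a : A),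
      Tendsto (fun m => Qiter N g gN step η Q0 m N i a ω) atTop (𝓝 (Qs N i a)) := by
    refine ae_of_all _ fun ω i a => ?_
    have : (fun m => Qiter N g gN step η Q0 m N i a ω) = fun _ => Qs N i a := by
      funext m; rw [hconstN, hQsN]
    rw [this]
    exact tendsto_const_nhds
  -- downward induction
  have main : ∀ d : ℕ, ∀ n : ℕ, n + d = N →
      (∀ᵐ ω ∂P, ∀ (i : S) (a : A),
        Tendsto (fun m => Qiter N g gN step η Q0 m n i a ω) atTop (𝓝 (Qs n i a))) := by
    intro d
    induction d with
    | zero =>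
      intro n hn
      have hnN : n = N := by omega
      subst hnN
      exact baseN
    | succ d ih =>
      intro n hn
      have hnN : n < N := by omega
      have hIH := ih (n + 1) (by omega)
      -- per-(i,a) noise setup
      set F : S → A → S → ℝ := fun i a j => g n i a j + ⨅ b : A, Qs (n + 1) j b with hF
      set ξ : S → A → ℕ → Ω → ℝ :=
        fun i a m ω => F i a (η m ⟨n, hnN⟩ i a ω) - Qs n i a with hξ
      have hξmeas : ∀ (i : S) (a : A) m, Measurable (ξ i a m) := fun i a m =>
        (measurable_of_countable (fun s : S => F i a s - Qs n i a)).comp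
          (hmeas m ⟨n, hnN⟩ i a)
      have hξbd : ∀ (i : S) (a : A) m ω,
          |ξ i a m ω| ≤ (∑ j, |F i a j|) + |Qs n i a| := by
        intro i a m ω
        have h1 : |F i a (η m ⟨n, hnN⟩ i a ω)| ≤ ∑ j, |F i a j| :=
          Finset.single_le_sum (f := fun j => |F i a j|) (fun j _ => abs_nonneg _)
            (Finset.mem_univ _)
        calc |ξ i a m ω| ≤ |F i a (η m ⟨n, hnN⟩ i a ω)| + |Qs n i a| := abs_sub _ _
          _ ≤ (∑ j, |F i a j|) + |Qs n i a| := by linarith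
      have hξmean : ∀ (i : S) (a : A) m, ∫ ω, ξ i a m ω ∂P = 0 := by
        intro i a m
        have hcomp : ∫ ω, F i a (η m ⟨n, hnN⟩ i a ω) ∂P = ∑ j, p n i a j * F i a j :=
          integral_comp_finite P (η m ⟨n, hnN⟩ i a) (hmeas m ⟨n, hnN⟩ i a)
            (p n i a) (hp0 n hnN i a) (hdist m ⟨n, hnN⟩ i a) (F i a)
        have hintF : Integrable (fun ω => F i a (η m ⟨n, hnN⟩ i a ω)) P := by
          refine integrable_of_abs_le
            ((measurable_of_countable (F i a)).comp (hmeas m ⟨n, hnN⟩ i a))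
            (C := ∑ j, |F i a j|) fun ω => ?_
          exact Finset.single_le_sum (f := fun j => |F i a j|) (fun j _ => abs_nonneg _)
            (Finset.mem_univ _)
        have : ∫ ω, ξ i a m ω ∂P
            = (∫ ω, F i a (η m ⟨n, hnN⟩ i a ω) ∂P) - ∫ _, Qs n i a ∂P := by
          simp only [hξ]
          exact integral_sub hintF (integrable_const _)
        rw [this, hcomp, integral_const]
        simp [hQsrec n hnN i a, hF]
      have hξind : ∀ (i : S) (a : A),
          iIndepFun (ξ i a) P := by
        intro i a
        have hη : iIndepFun
            (fun m => η m ⟨n, hnN⟩ i a) P := by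
          have hinj : Function.Injective
              (fun m : ℕ => ((m, ⟨n, hnN⟩, i, a) : ℕ × Fin N × S × A)) := by
            intro m m' hmm'
            simpa using congrArg Prod.fst hmm'
          exact iIndepFun_comp_of_injective hindep _ hinj
        exact hη.comp (fun _ (s : S) => F i a s - Qs n i a)
          (fun _ => measurable_of_countable _)
      have hstepgood : ∀ᵐ ω ∂P, ∀ (i : S) (a : A), ∃ L,
          Tendsto (fun M => ∑ m ∈ Finset.range M, step m * ξ i a m ω) atTop (𝓝 L) := by
        rw [ae_all_iff]
        intro i
        rw [ae_all_iff]
        intro a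
        exact exists_tendsto_sum_mul_of_indep P (ξ i a) (hξmeas i a)
          ((∑ j, |F i a j|) + |Qs n i a|) (by positivity) (hξbd i a) (hξmean i a)
          (hξind i a) step hstep_sq
      filter_upwards [hIH, hstepgood] with ω hIHω hξω
      intro i a
      obtain ⟨L, hL⟩ := hξω i a
      -- the drift term
      set δ : ℕ → ℝ := fun m =>
        (⨅ b : A, Qiter N g gN step η Q0 m (n + 1) (η m ⟨n, hnN⟩ i a ω) b ω)
          - ⨅ b : A, Qs (n + 1) (η m ⟨n, hnN⟩ i a ω) b with hδ
      have hδ0 : Tendsto δ atTop (𝓝 0) := by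
        set e : ℕ → ℝ := fun m => ∑ j,
          |(⨅ b : A, Qiter N g gN step η Q0 m (n + 1) j b ω) - ⨅ b : A, Qs (n + 1) j b|
          with he
        have he0 : Tendsto e atTop (𝓝 0) := by
          have : ∀ j : S, Tendsto (fun m =>
              |(⨅ b : A, Qiter N g gN step η Q0 m (n + 1) j b ω)
                - ⨅ b : A, Qs (n + 1) j b|) atTop (𝓝 0) := by
            intro j
            have h1 : Tendsto (fun m => ⨅ b : A, Qiter N g gN step η Q0 m (n + 1) j b ω)
                atTop (𝓝 (⨅ b : A, Qs (n + 1) j b)) :=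
              tendsto_iInf_fintype (fun b => hIHω j b)
            have h2 := (h1.sub_const (⨅ b : A, Qs (n + 1) j b)).abs
            simpa using h2
          have hsum := tendsto_finset_sum (Finset.univ : Finset S) (fun j _ => this j)
          simpa using hsum
        refine squeeze_zero_norm (fun m => ?_) he0
        rw [Real.norm_eq_abs, hδ, he]
        exact Finset.single_le_sum
          (f := fun j => |(⨅ b : A, Qiter N g gN step η Q0 m (n + 1) j b ω)
            - ⨅ b : A, Qs (n + 1) j b|)
          (fun j _ => abs_nonneg _) (Finset.mem_univ _)
      have hb : Tendsto (fun m => Qs n i a + δ m) atTop (𝓝 (Qs n i a)) := by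
        have := tendsto_const_nhds (x := Qs n i a) (f := atTop (α := ℕ)) |>.add hδ0
        simpa using this
      -- the recursion
      have hx : ∀ m, Qiter N g gN step η Q0 (m + 1) n i a ω
          = (1 - step m) * Qiter N g gN step η Q0 m n i a ω
            + step m * ((Qs n i a + δ m) + ξ i a m ω) := by
        intro m
        have h1 : Qiter N g gN step η Q0 (m + 1) n i a ω
            = Qiter N g gN step η Q0 m n i a ω +
              step m * (g n i a (η m ⟨n, hnN⟩ i a ω) +
                (⨅ b : A, Qiter N g gN step η Q0 m (n + 1) (η m ⟨n, hnN⟩ i a ω) b ω) -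
                Qiter N g gN step η Q0 m n i a ω) := by
          simp only [Qiter]
          rw [dif_pos hnN]
        rw [h1, hδ, hξ, hF]
        ring
      exact tendsto_contract_noise step (fun m => (hstep m).le) m0 hm0 hstep_sum
        (fun m => Qs n i a + δ m) (Qs n i a) hb (fun m => ξ i a m ω) L hL
        (fun m => Qiter N g gN step η Q0 m n i a ω) hx
  rw [ae_all_iff]
  intro n
  by_cases hn : n ≤ N
  · filter_upwards [main (N - n) n (by omega)] with ω hω
    exact fun _ => hω
  · exact ae_of_all _ fun ω h => absurd h hn


end
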